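/- Consistency implies closeness: let ρ be a density operator on H_A ⊗ H_B, M₀ = {M₀^a}, M₁ = {M₁^a} be POVMs on H_A, and N = {N^a} a POVM on H_B, all with the same outcome set. If C_ρ(M_i, N) := Σ_a tr((M_i^a ⊗ N^a)ρ) ≥ 1 − ε for i = 0,1, then Σ_a tr(sqrt(M₀^a) sqrt(M₁^a) ρ) ≥ 1 − 5ε, i.e., d_ρ(M₀, M₁) := [2 − 2 Re Σ_a tr(sqrt(M₀^a)sqrt(M₁^a)ρ)]^{1/2} ≤ sqrt(10 ε). -/

import Mathlib

open Matrix
open scoped ComplexOrder Kronecker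

section Helpers
set_option linter.unusedSectionVars false

variable {n m : Type*} [Fintype n] [DecidableEq n] [Fintype m] [DecidableEq m]

open scoped MatrixOrder in
noncomputable def Matrix.PosSemidef.sqrt {A : Matrix n n ℂ} (_hA : A.PosSemidef) : Matrix n n ℂ :=
  CFC.sqrt A

open scoped MatrixOrder in
lemma Matrix.PosSemidef.posSemidef_sqrt {A : Matrix n n ℂ} (hA : A.PosSemidef) :
    hA.sqrt.PosSemidef :=
  (CFC.sqrt_nonneg A).posSemidef

open scoped MatrixOrder in
lemma Matrix.PosSemidef.sqrt_mul_self {A : Matrix n n ℂ} (hA : A.PosSemidef) :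
    hA.sqrt * hA.sqrt = A :=
  CFC.sqrt_mul_sqrt_self A hA.nonneg

lemma kron_conjT (A : Matrix n n ℂ) (B : Matrix m m ℂ) : (A ⊗ₖ B)ᴴ = Aᴴ ⊗ₖ Bᴴ := by
  ext ⟨i, j⟩ ⟨k, l⟩
  simp [Matrix.conjTranspose_apply, Matrix.kroneckerMap_apply, star_mul', mul_comm]

lemma kron_sub_left (A B : Matrix n n ℂ) (C : Matrix m m ℂ) :
    (A - B) ⊗ₖ C = A ⊗ₖ C - B ⊗ₖ C := by
  ext ⟨i, j⟩ ⟨k, l⟩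
  simp [Matrix.kroneckerMap_apply, sub_mul]

lemma kron_sub_right (A : Matrix n n ℂ) (B C : Matrix m m ℂ) :
    A ⊗ₖ (B - C) = A ⊗ₖ B - A ⊗ₖ C := by
  ext ⟨i, j⟩ ⟨k, l⟩
  simp [Matrix.kroneckerMap_apply, mul_sub]

lemma kron_sum_left {ι : Type*} [Fintype ι] (A : ι → Matrix n n ℂ) (B : Matrix m m ℂ) :
    (∑ a, A a) ⊗ₖ B = ∑ a, A a ⊗ₖ B := by
  ext ⟨i, j⟩ ⟨k, l⟩
  simp [Matrix.kroneckerMap_apply, Matrix.sum_apply, Finset.sum_mul]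

lemma kron_sum_right {ι : Type*} [Fintype ι] (A : Matrix n n ℂ) (B : ι → Matrix m m ℂ) :
    A ⊗ₖ (∑ a, B a) = ∑ a, A ⊗ₖ B a := by
  ext ⟨i, j⟩ ⟨k, l⟩
  simp [Matrix.kroneckerMap_apply, Matrix.sum_apply, Finset.mul_sum]

lemma psd_kron {A : Matrix n n ℂ} {B : Matrix m m ℂ} (hA : A.PosSemidef) (hB : B.PosSemidef) :
    (A ⊗ₖ B).PosSemidef := by
  have h : A ⊗ₖ B = (hA.sqrt ⊗ₖ hB.sqrt)ᴴ * (hA.sqrt ⊗ₖ hB.sqrt) := by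
    rw [kron_conjT, hA.posSemidef_sqrt.1, hB.posSemidef_sqrt.1, ← Matrix.mul_kronecker_mul,
      hA.sqrt_mul_self, hB.sqrt_mul_self]
  rw [h]
  exact Matrix.posSemidef_conjTranspose_mul_self _

lemma psd_sum {ι : Type*} (s : Finset ι) (f : ι → Matrix n n ℂ)
    (h : ∀ i ∈ s, (f i).PosSemidef) : (∑ i ∈ s, f i).PosSemidef :=
  Finset.sum_induction f _ (fun _ _ ha hb => ha.add hb) Matrix.PosSemidef.zero h

lemma one_sub_psd {ι : Type*} [Fintype ι] {M : ι → Matrix n n ℂ}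
    (hM : ∀ i, (M i).PosSemidef) (h1 : ∑ i, M i = 1) (a : ι) :
    ((1 : Matrix n n ℂ) - M a).PosSemidef := by
  classical
  have h : (1 : Matrix n n ℂ) - M a = ∑ i ∈ Finset.univ.erase a, M i := by
    rw [Finset.sum_erase_eq_sub (Finset.mem_univ a), h1]
  rw [h]
  exact psd_sum _ _ fun i _ => hM i

lemma trace_psd_nonneg {A : Matrix n n ℂ} (hA : A.PosSemidef) : 0 ≤ A.trace := by
  rw [Matrix.trace]
  apply Finset.sum_nonneg
  intro i _
  have h := hA.dotProduct_mulVec_nonneg (Pi.single i 1)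
  simpa [dotProduct, Matrix.mulVec, Pi.single_apply, Finset.mul_sum, mul_ite,
    Finset.sum_ite_eq, Finset.sum_ite_eq'] using h

lemma trace_mul_psd_nonneg {A B : Matrix n n ℂ} (hA : A.PosSemidef) (hB : B.PosSemidef) :
    0 ≤ (A * B).trace := by
  have h1 : A * B = hA.sqrt * (hA.sqrt * B) := by rw [← Matrix.mul_assoc, hA.sqrt_mul_self]
  have h2 : (A * B).trace = (hA.sqrt * B * hA.sqrt).trace := by
    rw [h1, Matrix.trace_mul_comm, Matrix.mul_assoc]
  rw [h2]
  have h3 := hB.mul_mul_conjTranspose_same hA.sqrt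
  rw [hA.posSemidef_sqrt.1] at h3
  exact trace_psd_nonneg h3

lemma re_trace_mono {A B ρ : Matrix n n ℂ} (hρ : ρ.PosSemidef) (h : (B - A).PosSemidef) :
    ((A * ρ).trace).re ≤ ((B * ρ).trace).re := by
  have h0 := trace_mul_psd_nonneg h hρ
  rw [Matrix.sub_mul, Matrix.trace_sub] at h0
  have h1 := (Complex.le_def.mp h0).1
  simp only [Complex.sub_re, Complex.zero_re] at h1
  linarith

lemma psd_sub_sq {s : Matrix n n ℂ} (hs : s.PosSemidef) (h1 : ((1 : Matrix n n ℂ) - s * s).PosSemidef) :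
    (s - s * s).PosSemidef := by
  have hH : sᴴ = s := hs.1
  have hone : ((1 : Matrix n n ℂ) - s).PosSemidef := by
    refine Matrix.PosSemidef.of_dotProduct_mulVec_nonneg ?_ ?_
    · exact Matrix.isHermitian_one.sub hs.1
    · intro x
      have ha := (Matrix.posSemidef_conjTranspose_mul_self ((1 : Matrix n n ℂ) - s)).dotProduct_mulVec_nonneg x
      have hb := h1.dotProduct_mulVec_nonneg x
      have key : ((1 : Matrix n n ℂ) - s)ᴴ * (1 - s) + (1 - s * s) = (1 - s) + (1 - s) := by
        rw [Matrix.conjTranspose_sub, Matrix.conjTranspose_one, hH]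
        noncomm_ring
      have h2 : 0 ≤ star x ⬝ᵥ ((((1 : Matrix n n ℂ) - s) + (1 - s)) *ᵥ x) := by
        rw [← key, Matrix.add_mulVec, dotProduct_add]
        exact add_nonneg ha hb
      rw [Matrix.add_mulVec, dotProduct_add] at h2
      set c := star x ⬝ᵥ (((1 : Matrix n n ℂ) - s) *ᵥ x) with hc
      rw [Complex.le_def] at h2 ⊢
      simp only [Complex.add_re, Complex.add_im, Complex.zero_re, Complex.zero_im] at h2 ⊢
      constructor <;> linarith [h2.1, h2.2]
  set t := hs.sqrt with ht
  have hts : t * t = s := hs.sqrt_mul_self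
  have key2 : s - s * s = t * ((1 : Matrix n n ℂ) - s) * tᴴ := by
    rw [hs.posSemidef_sqrt.1]
    have h3 : t * ((1 : Matrix n n ℂ) - s) * t = t * t - t * s * t := by noncomm_ring
    have h4 : t * s * t = s * s := by rw [← hts]; noncomm_ring
    rw [h3, h4, hts]
  rw [key2]
  exact hone.mul_mul_conjTranspose_same t

end Helpers


/-- consistency implies closeness: if the POVMs `M₀` and `M₁` on
`H_A` are each `ε`-consistent with the POVM `N` on `H_B` with respect to `ρ`,
then `Σ_a tr(√(M₀^a) √(M₁^a) ρ) ≥ 1 − 5ε`, i.e.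
`d_ρ(M₀, M₁) ≤ sqrt (10 ε)`. -/
theorem stmt_10 {nA nB : ℕ} {α : Type*} [Fintype α]
    (ρ : Matrix (Fin nA × Fin nB) (Fin nA × Fin nB) ℂ)
    (hρ : ρ.PosSemidef) (hρtr : ρ.trace = 1)
    (M₀ M₁ : α → Matrix (Fin nA) (Fin nA) ℂ) (N : α → Matrix (Fin nB) (Fin nB) ℂ)
    (hM₀ : ∀ a, (M₀ a).PosSemidef) (hM₀1 : ∑ a, M₀ a = 1)
    (hM₁ : ∀ a, (M₁ a).PosSemidef) (hM₁1 : ∑ a, M₁ a = 1)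
    (hN : ∀ a, (N a).PosSemidef) (hN1 : ∑ a, N a = 1)
    -- positive semidefinite square roots of the POVM elements
    (s₀ s₁ : α → Matrix (Fin nA) (Fin nA) ℂ)
    (hs₀ : ∀ a, (s₀ a).PosSemidef) (hs₀2 : ∀ a, s₀ a * s₀ a = M₀ a)
    (hs₁ : ∀ a, (s₁ a).PosSemidef) (hs₁2 : ∀ a, s₁ a * s₁ a = M₁ a)
    (ε : ℝ)
    (hc₀ : (∑ a, ((M₀ a ⊗ₖ N a) * ρ).trace).re ≥ 1 - ε)
    (hc₁ : (∑ a, ((M₁ a ⊗ₖ N a) * ρ).trace).re ≥ 1 - ε) :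
    (∑ a, (((s₀ a * s₁ a) ⊗ₖ (1 : Matrix (Fin nB) (Fin nB) ℂ)) * ρ).trace).re ≥ 1 - 5 * ε ∧
    Real.sqrt (2 - 2 * (∑ a, (((s₀ a * s₁ a) ⊗ₖ (1 : Matrix (Fin nB) (Fin nB) ℂ)) * ρ).trace).re)
      ≤ Real.sqrt (10 * ε) := by
  classical
  have hr : hρ.sqrt * hρ.sqrt = ρ := hρ.sqrt_mul_self
  set r := hρ.sqrt with hrdef
  have hrH : rᴴ = r := hρ.posSemidef_sqrt.1
  set t : α → Matrix (Fin nB) (Fin nB) ℂ := fun a => (hN a).sqrt with htdef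
  have htH : ∀ a, (t a)ᴴ = t a := fun a => (hN a).posSemidef_sqrt.1
  have htmul : ∀ a, t a * t a = N a := fun a => (hN a).sqrt_mul_self
  -- the vectors
  set v : (α → Matrix (Fin nA × Fin nB) (Fin nA × Fin nB) ℂ)
      → EuclideanSpace ℂ (α × ((Fin nA × Fin nB) × (Fin nA × Fin nB))) :=
    fun F => WithLp.toLp 2 (fun x : α × ((Fin nA × Fin nB) × (Fin nA × Fin nB)) =>
      (F x.1 * r) x.2.1 x.2.2) with hvdef
  have key : ∀ F G : α → Matrix (Fin nA × Fin nB) (Fin nA × Fin nB) ℂ,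
      (inner ℂ (v F) (v G) : ℂ) = ∑ a, ((F a)ᴴ * G a * ρ).trace := by
    intro F G
    have hper : ∀ a : α, ((F a)ᴴ * G a * ρ).trace
        = ∑ p : (Fin nA × Fin nB) × (Fin nA × Fin nB),
            (starRingEnd ℂ) ((F a * r) p.1 p.2) * ((G a * r) p.1 p.2) := by
      intro a
      have h2 : (F a)ᴴ * G a * ρ = ((F a)ᴴ * G a * r) * r := by
        rw [← hr]; noncomm_ring
      have h3 : r * ((F a)ᴴ * G a * r) = (F a * r)ᴴ * (G a * r) := by
        rw [Matrix.conjTranspose_mul, hrH]; noncomm_ring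
      rw [h2, Matrix.trace_mul_comm, h3, Fintype.sum_prod_type]
      simp only [Matrix.trace, Matrix.diag, Matrix.mul_apply, Matrix.conjTranspose_apply,
        Complex.star_def]
      rw [Finset.sum_comm]
    calc (inner ℂ (v F) (v G) : ℂ)
        = ∑ x : α × ((Fin nA × Fin nB) × (Fin nA × Fin nB)),
            (starRingEnd ℂ) (v F x) * (v G x) := by
          simp [PiLp.inner_apply, RCLike.inner_apply, mul_comm]
      _ = ∑ a, ∑ p : (Fin nA × Fin nB) × (Fin nA × Fin nB),
            (starRingEnd ℂ) ((F a * r) p.1 p.2) * ((G a * r) p.1 p.2) := by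
          rw [Fintype.sum_prod_type]
      _ = ∑ a, ((F a)ᴴ * G a * ρ).trace :=
          Finset.sum_congr rfl fun a _ => (hper a).symm
  -- the three families
  set P : α → Matrix (Fin nA × Fin nB) (Fin nA × Fin nB) ℂ :=
    fun a => s₀ a ⊗ₖ (1 : Matrix (Fin nB) (Fin nB) ℂ) with hPdef
  set Q : α → Matrix (Fin nA × Fin nB) (Fin nA × Fin nB) ℂ :=
    fun a => s₁ a ⊗ₖ (1 : Matrix (Fin nB) (Fin nB) ℂ) with hQdef
  set W : α → Matrix (Fin nA × Fin nB) (Fin nA × Fin nB) ℂ :=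
    fun a => (1 : Matrix (Fin nA) (Fin nA) ℂ) ⊗ₖ t a with hWdef
  have hPHQ : ∀ a, (P a)ᴴ * Q a = (s₀ a * s₁ a) ⊗ₖ (1 : Matrix (Fin nB) (Fin nB) ℂ) := by
    intro a
    rw [hPdef, hQdef]
    rw [kron_conjT, (hs₀ a).1, Matrix.conjTranspose_one, ← Matrix.mul_kronecker_mul, one_mul]
  have hPHP : ∀ a, (P a)ᴴ * P a = M₀ a ⊗ₖ (1 : Matrix (Fin nB) (Fin nB) ℂ) := by
    intro a
    rw [hPdef, kron_conjT, (hs₀ a).1, Matrix.conjTranspose_one, ← Matrix.mul_kronecker_mul,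
      one_mul, hs₀2]
  have hQHQ : ∀ a, (Q a)ᴴ * Q a = M₁ a ⊗ₖ (1 : Matrix (Fin nB) (Fin nB) ℂ) := by
    intro a
    rw [hQdef, kron_conjT, (hs₁ a).1, Matrix.conjTranspose_one, ← Matrix.mul_kronecker_mul,
      one_mul, hs₁2]
  have hWHW : ∀ a, (W a)ᴴ * W a = (1 : Matrix (Fin nA) (Fin nA) ℂ) ⊗ₖ N a := by
    intro a
    rw [hWdef, kron_conjT, Matrix.conjTranspose_one, htH, ← Matrix.mul_kronecker_mul,
      one_mul, htmul]
  have hPHW : ∀ a, (P a)ᴴ * W a = s₀ a ⊗ₖ t a := by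
    intro a
    rw [hPdef, hWdef, kron_conjT, (hs₀ a).1, Matrix.conjTranspose_one,
      ← Matrix.mul_kronecker_mul, mul_one, one_mul]
  have hQHW : ∀ a, (Q a)ᴴ * W a = s₁ a ⊗ₖ t a := by
    intro a
    rw [hQdef, hWdef, kron_conjT, (hs₁ a).1, Matrix.conjTranspose_one,
      ← Matrix.mul_kronecker_mul, mul_one, one_mul]
  -- sums equal one
  have hPPsum : (inner ℂ (v P) (v P) : ℂ) = 1 := by
    rw [key]
    simp only [hPHP]
    rw [← Matrix.trace_sum, ← Finset.sum_mul, ← kron_sum_left, hM₀1,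
      Matrix.one_kronecker_one, one_mul, hρtr]
  have hQQsum : (inner ℂ (v Q) (v Q) : ℂ) = 1 := by
    rw [key]
    simp only [hQHQ]
    rw [← Matrix.trace_sum, ← Finset.sum_mul, ← kron_sum_left, hM₁1,
      Matrix.one_kronecker_one, one_mul, hρtr]
  have hWWsum : (inner ℂ (v W) (v W) : ℂ) = 1 := by
    rw [key]
    simp only [hWHW]
    rw [← Matrix.trace_sum, ← Finset.sum_mul, ← kron_sum_right, hN1,
      Matrix.one_kronecker_one, one_mul, hρtr]
  -- consistency bounds
  have hbound : ∀ (s : α → Matrix (Fin nA) (Fin nA) ℂ) (M : α → Matrix (Fin nA) (Fin nA) ℂ),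
      (∀ a, (s a).PosSemidef) → (∀ a, s a * s a = M a) → (∀ a, (M a).PosSemidef) →
      (∑ a, M a = 1) →
      (∑ a, ((M a ⊗ₖ N a) * ρ).trace).re ≤ (∑ a, ((s a ⊗ₖ t a) * ρ).trace).re := by
    intro s M hs hs2 hM hM1
    rw [Complex.re_sum, Complex.re_sum]
    apply Finset.sum_le_sum
    intro a _
    apply re_trace_mono hρ
    have hdec : s a ⊗ₖ t a - M a ⊗ₖ N a = (s a - M a) ⊗ₖ t a + M a ⊗ₖ (t a - N a) := by
      rw [kron_sub_left, kron_sub_right]; abel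
    rw [hdec]
    have h01 : (s a - M a).PosSemidef := by
      rw [← hs2 a]
      exact psd_sub_sq (hs a) (by rw [hs2 a]; exact one_sub_psd hM hM1 a)
    have h02 : (t a - N a).PosSemidef := by
      have h := psd_sub_sq (hN a).posSemidef_sqrt (by rw [htmul a]; exact one_sub_psd hN hN1 a)
      rwa [htmul a] at h
    exact (psd_kron h01 (hN a).posSemidef_sqrt).add (psd_kron (hM a) h02)
  have hPWre : (1 : ℝ) - ε ≤ (inner ℂ (v P) (v W) : ℂ).re := by
    rw [key]
    have h := hbound s₀ M₀ hs₀ hs₀2 hM₀ hM₀1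
    have heq : ∑ a, ((P a)ᴴ * W a * ρ).trace = ∑ a, ((s₀ a ⊗ₖ t a) * ρ).trace :=
      Finset.sum_congr rfl fun a _ => by rw [hPHW]
    rw [heq]
    exact le_trans hc₀ h
  have hQWre : (1 : ℝ) - ε ≤ (inner ℂ (v Q) (v W) : ℂ).re := by
    rw [key]
    have h := hbound s₁ M₁ hs₁ hs₁2 hM₁ hM₁1
    have heq : ∑ a, ((Q a)ᴴ * W a * ρ).trace = ∑ a, ((s₁ a ⊗ₖ t a) * ρ).trace :=
      Finset.sum_congr rfl fun a _ => by rw [hQHW]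
    rw [heq]
    exact le_trans hc₁ h
  -- norms
  have hnP : ‖v P‖ ^ 2 = 1 := by
    have h := inner_self_eq_norm_sq (𝕜 := ℂ) (v P)
    rw [hPPsum] at h
    simpa using h.symm
  have hnQ : ‖v Q‖ ^ 2 = 1 := by
    have h := inner_self_eq_norm_sq (𝕜 := ℂ) (v Q)
    rw [hQQsum] at h
    simpa using h.symm
  have hnW : ‖v W‖ ^ 2 = 1 := by
    have h := inner_self_eq_norm_sq (𝕜 := ℂ) (v W)
    rw [hWWsum] at h
    simpa using h.symm
  have hd1 : ‖v P - v W‖ ^ 2 ≤ 2 * ε := by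
    rw [norm_sub_sq (𝕜 := ℂ), hnP, hnW]
    have h : RCLike.re (inner ℂ (v P) (v W) : ℂ) = (inner ℂ (v P) (v W) : ℂ).re := rfl
    rw [h]
    linarith
  have hd2 : ‖v Q - v W‖ ^ 2 ≤ 2 * ε := by
    rw [norm_sub_sq (𝕜 := ℂ), hnQ, hnW]
    have h : RCLike.re (inner ℂ (v Q) (v W) : ℂ) = (inner ℂ (v Q) (v W) : ℂ).re := rfl
    rw [h]
    linarith
  have hεnn : (0 : ℝ) ≤ 2 * ε := le_trans (sq_nonneg _) hd1
  have hcs : |((inner ℂ (v P - v W) (v Q - v W) : ℂ)).re| ≤ 2 * ε := by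
    have h1 : ‖(inner ℂ (v P - v W) (v Q - v W) : ℂ)‖ ≤ ‖v P - v W‖ * ‖v Q - v W‖ :=
      norm_inner_le_norm _ _
    have h2 : ‖v P - v W‖ ≤ Real.sqrt (2 * ε) := by
      rw [← Real.sqrt_sq (norm_nonneg (v P - v W))]
      exact Real.sqrt_le_sqrt hd1
    have h3 : ‖v Q - v W‖ ≤ Real.sqrt (2 * ε) := by
      rw [← Real.sqrt_sq (norm_nonneg (v Q - v W))]
      exact Real.sqrt_le_sqrt hd2
    have h4 : ‖v P - v W‖ * ‖v Q - v W‖ ≤ 2 * ε := by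
      calc ‖v P - v W‖ * ‖v Q - v W‖ ≤ Real.sqrt (2 * ε) * Real.sqrt (2 * ε) :=
            mul_le_mul h2 h3 (norm_nonneg _) (Real.sqrt_nonneg _)
        _ = 2 * ε := Real.mul_self_sqrt hεnn
    calc |((inner ℂ (v P - v W) (v Q - v W) : ℂ)).re|
        ≤ ‖(inner ℂ (v P - v W) (v Q - v W) : ℂ)‖ := Complex.abs_re_le_norm _
      _ ≤ ‖v P - v W‖ * ‖v Q - v W‖ := h1
      _ ≤ 2 * ε := h4
  -- expansion
  have hexp : (inner ℂ (v P) (v Q) : ℂ)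
      = (inner ℂ (v W) (v W) : ℂ)
        + ((inner ℂ (v P) (v W) : ℂ) - (inner ℂ (v W) (v W) : ℂ))
        + ((inner ℂ (v W) (v Q) : ℂ) - (inner ℂ (v W) (v W) : ℂ))
        + (inner ℂ (v P - v W) (v Q - v W) : ℂ) := by
    simp only [inner_sub_left, inner_sub_right]
    ring
  have hWQre : (inner ℂ (v W) (v Q) : ℂ).re = (inner ℂ (v Q) (v W) : ℂ).re := by
    rw [← inner_conj_symm (v W) (v Q)]
    exact Complex.conj_re _
  have hWWre : (inner ℂ (v W) (v W) : ℂ).re = 1 := by rw [hWWsum]; simp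
  have hre : (inner ℂ (v P) (v Q) : ℂ).re ≥ 1 - 4 * ε := by
    have h := congrArg Complex.re hexp
    simp only [Complex.add_re, Complex.sub_re] at h
    have hlow : -(2 * ε) ≤ ((inner ℂ (v P - v W) (v Q - v W) : ℂ)).re := neg_le_of_abs_le hcs
    rw [h, hWWre, hWQre]
    linarith
  have hεpos : (0 : ℝ) ≤ ε := by linarith
  have hgoal_eq : (∑ a, (((s₀ a * s₁ a) ⊗ₖ (1 : Matrix (Fin nB) (Fin nB) ℂ)) * ρ).trace).re
      = (inner ℂ (v P) (v Q) : ℂ).re := by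
    rw [key]
    congr 1
    exact Finset.sum_congr rfl fun a _ => by rw [hPHQ]
  constructor
  · rw [hgoal_eq]; linarith
  · apply Real.sqrt_le_sqrt
    rw [hgoal_eq]
    linarith
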